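/- Let k, ℓ be integers with k ≥ 1 and ℓ ≥ 1. For θ ∈ [0, π/2] let P_θ = [[cos θ · I₂, −sin θ · I₂],[sin θ · I₂, cos θ · I₂]] and define G(θ, t) = P_θ · blockdiag(exp(ktJ), exp(ℓtJ)) · P_θ⁻¹ for t ∈ [0, 2π]. Then G(0,t) = blockdiag(exp(ktJ), exp(ℓtJ)), G(π/2, t) = blockdiag(exp(ℓtJ), exp(ktJ)), and for each θ the loop t ↦ G(θ,t) is a positive loop in Sp(4) based at the identity. Consequently blockdiag(exp(ktJ), exp(ℓtJ)) and blockdiag(exp(ℓtJ), exp(ktJ)) are homotopic through positive loops based at the identity. -/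

import Mathlib

open Matrix Set Real

attribute [local instance] Matrix.normedAddCommGroup Matrix.normedSpace

/-- The standard complex structure on `ℝ²`. -/
def J2 : Matrix (Fin 2) (Fin 2) ℝ := !![0, -1; 1, 0]

/-- The block-diagonal complex structure `J₄ = diag(J, J)` on `ℝ⁴`. -/
def J4 : Matrix (Fin 2 ⊕ Fin 2) (Fin 2 ⊕ Fin 2) ℝ := Matrix.fromBlocks J2 0 0 J2

/-- The 4×4 block-diagonal matrix with 2×2 diagonal blocks `X` and `Y`. -/
def blockDiag2 (X Y : Matrix (Fin 2) (Fin 2) ℝ) :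
    Matrix (Fin 2 ⊕ Fin 2) (Fin 2 ⊕ Fin 2) ℝ :=
  Matrix.fromBlocks X 0 0 Y

/-- A positive path in `Sp(4)` (taken w.r.t. `J₄ = diag(J, J)`) on the parameter set
`s`. -/
def IsPosPathJ4 (s : Set ℝ) (A : ℝ → Matrix (Fin 2 ⊕ Fin 2) (Fin 2 ⊕ Fin 2) ℝ) : Prop :=
  ∀ t ∈ s, (A t)ᵀ * J4 * A t = J4 ∧
    ∃ P : Matrix (Fin 2 ⊕ Fin 2) (Fin 2 ⊕ Fin 2) ℝ, P.IsSymm ∧ P.PosDef ∧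
      HasDerivWithinAt A (J4 * P * A t) s t

/-- A positive loop in `Sp(4)` (w.r.t. `J₄ = diag(J, J)`) based at `K`. -/
noncomputable def PosLoopJ4 (K : Matrix (Fin 2 ⊕ Fin 2) (Fin 2 ⊕ Fin 2) ℝ)
    (A : ℝ → Matrix (Fin 2 ⊕ Fin 2) (Fin 2 ⊕ Fin 2) ℝ) : Prop :=
  IsPosPathJ4 (Icc 0 (2 * π)) A ∧ A 0 = K ∧ A (2 * π) = K

/-- Two loops in `Sp(4)` (w.r.t. `J₄ = diag(J, J)`) based at `K` are homotopic through
positive loops based at `K`. -/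
noncomputable def PosHomotopicJ4 (K : Matrix (Fin 2 ⊕ Fin 2) (Fin 2 ⊕ Fin 2) ℝ)
    (A B : ℝ → Matrix (Fin 2 ⊕ Fin 2) (Fin 2 ⊕ Fin 2) ℝ) : Prop :=
  ∃ H : ℝ → ℝ → Matrix (Fin 2 ⊕ Fin 2) (Fin 2 ⊕ Fin 2) ℝ,
    ContinuousOn (fun p : ℝ × ℝ => H p.1 p.2) (Icc 0 1 ×ˢ Icc 0 (2 * π)) ∧
    (∀ t ∈ Icc (0 : ℝ) (2 * π), H 0 t = A t ∧ H 1 t = B t) ∧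
    (∀ s ∈ Icc (0 : ℝ) 1, H s 0 = K ∧ H s (2 * π) = K) ∧
    (∀ s ∈ Icc (0 : ℝ) 1, IsPosPathJ4 (Icc 0 (2 * π)) (H s))

namespace Stmt15Aux

noncomputable section

abbrev M2 := Matrix (Fin 2) (Fin 2) ℝ

lemma J2_mul_J2 : J2 * J2 = -1 := by
  ext i j
  fin_cases i <;> fin_cases j <;>
    simp [J2, Matrix.mul_apply, Fin.sum_univ_two]

def Rot (a : ℝ) : M2 := !![Real.cos a, -Real.sin a; Real.sin a, Real.cos a]

lemma Rot_eq (a : ℝ) : Rot a = Real.cos a • (1 : M2) + Real.sin a • J2 := by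
  ext i j
  fin_cases i <;> fin_cases j <;> simp [Rot, J2]

def cmat : ℂ →ₐ[ℝ] M2 where
  toFun z := z.re • (1 : M2) + z.im • J2
  map_one' := by simp
  map_mul' z w := by
    simp only [Matrix.smul_mul, Matrix.mul_smul, add_mul, mul_add, one_mul, mul_one,
      J2_mul_J2, Complex.mul_re, Complex.mul_im, smul_smul]
    module
  map_zero' := by simp
  map_add' z w := by
    simp only [Complex.add_re, Complex.add_im, add_smul]
    abel
  commutes' r := by
    simp [Algebra.algebraMap_eq_smul_one]

lemma cmat_cont : Continuous cmat := by
  have : ⇑cmat = fun z : ℂ => z.re • (1 : M2) + z.im • J2 := rfl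
  rw [this]
  fun_prop

lemma exp_smul_J2 (a : ℝ) : NormedSpace.exp (a • J2) = Rot a := by
  letI : SeminormedRing M2 := Matrix.linftyOpSemiNormedRing
  letI : NormedRing M2 := Matrix.linftyOpNormedRing
  letI : NormedAlgebra ℝ M2 := Matrix.linftyOpNormedAlgebra
  have h1 : cmat ((a : ℂ) * Complex.I) = a • J2 := by
    show ((a : ℂ) * Complex.I).re • (1 : M2) + ((a : ℂ) * Complex.I).im • J2 = a • J2
    simp
  have h2 := NormedSpace.map_exp cmat cmat_cont ((a : ℂ) * Complex.I)
  rw [h1] at h2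
  refine h2.symm.trans ?_
  have h3 : NormedSpace.exp ((a : ℂ) * Complex.I) = Complex.exp ((a : ℂ) * Complex.I) := by
    rw [Complex.exp_eq_exp_ℂ]
  rw [h3, Complex.exp_mul_I]
  have h4 : Complex.cos (a : ℂ) + Complex.sin (a : ℂ) * Complex.I
      = (Real.cos a : ℂ) + (Real.sin a : ℂ) * Complex.I := by
    rw [Complex.ofReal_cos, Complex.ofReal_sin]
  rw [h4]
  show ((Real.cos a : ℂ) + (Real.sin a : ℂ) * Complex.I).re • (1 : M2)
      + ((Real.cos a : ℂ) + (Real.sin a : ℂ) * Complex.I).im • J2 = Rot a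
  rw [Rot_eq]
  simp only [Complex.add_re, Complex.add_im, Complex.mul_re, Complex.mul_im, Complex.I_re,
    Complex.I_im, Complex.ofReal_re, Complex.ofReal_im]
  ring_nf

-- ## Block matrices

abbrev M4 := Matrix (Fin 2 ⊕ Fin 2) (Fin 2 ⊕ Fin 2) ℝ

lemma blockDiag2_mul (X Y Z W : M2) :
    blockDiag2 X Y * blockDiag2 Z W = blockDiag2 (X * Z) (Y * W) := by
  simp [blockDiag2, Matrix.fromBlocks_multiply]

lemma blockDiag2_transpose (X Y : M2) :
    (blockDiag2 X Y)ᵀ = blockDiag2 Xᵀ Yᵀ := by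
  simp [blockDiag2, Matrix.fromBlocks_transpose]

lemma blockDiag2_one : blockDiag2 1 1 = 1 := Matrix.fromBlocks_one

def Km : M4 := Matrix.fromBlocks 0 (-1) 1 0

def PM (θ : ℝ) : M4 :=
  Matrix.fromBlocks (Real.cos θ • 1) ((-Real.sin θ) • 1) (Real.sin θ • 1) (Real.cos θ • 1)

lemma PM_eq (θ : ℝ) : PM θ = Real.cos θ • (1 : M4) + Real.sin θ • Km := by
  rw [PM, Km, show (1 : M4) = Matrix.fromBlocks (1 : M2) 0 0 (1 : M2) from Matrix.fromBlocks_one.symm]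
  rw [Matrix.fromBlocks_smul, Matrix.fromBlocks_smul, Matrix.fromBlocks_add]
  simp [neg_smul]

lemma Km_mul_Km : Km * Km = -1 := by
  rw [Km, show (-1 : M4) = Matrix.fromBlocks (-1 : M2) (-0) (-0) (-1 : M2) by
    rw [← Matrix.fromBlocks_neg, Matrix.fromBlocks_one]]
  rw [Matrix.fromBlocks_multiply]
  simp

lemma Km_transpose : Kmᵀ = -Km := by
  rw [Km, Matrix.fromBlocks_transpose, Matrix.fromBlocks_neg]
  simp

lemma Km_mul_J4 : Km * J4 = J4 * Km := by
  rw [Km, J4, Matrix.fromBlocks_multiply, Matrix.fromBlocks_multiply]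
  simp

lemma PM_mul_J4 (θ : ℝ) : PM θ * J4 = J4 * PM θ := by
  rw [PM_eq]
  simp only [add_mul, mul_add, Matrix.smul_mul, Matrix.mul_smul, one_mul, mul_one, Km_mul_J4]

lemma PM_transpose (θ : ℝ) : (PM θ)ᵀ = PM (-θ) := by
  rw [PM_eq θ, PM_eq (-θ)]
  simp [Matrix.transpose_add, Matrix.transpose_smul, Km_transpose, Real.cos_neg, Real.sin_neg,
    smul_neg, neg_smul]

lemma PM_mul (θ φ : ℝ) : PM θ * PM φ = PM (θ + φ) := by
  rw [PM_eq θ, PM_eq φ, PM_eq (θ + φ)]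
  simp only [add_mul, mul_add, Matrix.smul_mul, Matrix.mul_smul, one_mul, mul_one, Km_mul_Km,
    smul_smul, Real.cos_add, Real.sin_add, smul_neg]
  module

lemma PM_zero : PM 0 = 1 := by
  rw [PM_eq]; simp

lemma PM_mul_PMT (θ : ℝ) : PM θ * (PM θ)ᵀ = 1 := by
  rw [PM_transpose, PM_mul, add_neg_cancel, PM_zero]

lemma PMT_mul_PM (θ : ℝ) : (PM θ)ᵀ * PM θ = 1 := by
  rw [PM_transpose, PM_mul, neg_add_cancel, PM_zero]

lemma PM_inv (θ : ℝ) : (PM θ)⁻¹ = (PM θ)ᵀ := Matrix.inv_eq_right_inv (PM_mul_PMT θ)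

lemma PM_pi_div_two : PM (π / 2) = Km := by
  rw [PM_eq]; simp

lemma PM_swap (X Y : M2) :
    PM (π / 2) * blockDiag2 X Y * (PM (π / 2))ᵀ = blockDiag2 Y X := by
  rw [PM_pi_div_two, Km_transpose, Km, blockDiag2, Matrix.mul_neg,
    Matrix.fromBlocks_multiply, Matrix.fromBlocks_multiply, Matrix.fromBlocks_neg,
    blockDiag2]
  congr 1 <;> simp

-- ## Rotation facts

lemma Rot_zero : Rot 0 = 1 := by
  ext i j
  fin_cases i <;> fin_cases j <;> simp [Rot, Matrix.one_apply]

lemma Rot_int_two_pi (m : ℤ) : Rot ((m : ℝ) * (2 * π)) = 1 := by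
  have hc : Real.cos ((m : ℝ) * (2 * π)) = 1 := Real.cos_int_mul_two_pi m
  have hs : Real.sin ((m : ℝ) * (2 * π)) = 0 := by
    have : (m : ℝ) * (2 * π) = ((2 * m : ℤ) : ℝ) * π := by push_cast; ring
    rw [this]; exact Real.sin_int_mul_pi _
  ext i j
  fin_cases i <;> fin_cases j <;> simp [Rot, hc, hs, Matrix.one_apply]

lemma Rot_transpose (a : ℝ) : (Rot a)ᵀ = !![Real.cos a, Real.sin a; -Real.sin a, Real.cos a] := by
  ext i j
  fin_cases i <;> fin_cases j <;> simp [Rot, Matrix.transpose_apply]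

lemma Rot_symp (a : ℝ) : (Rot a)ᵀ * J2 * Rot a = J2 := by
  rw [Rot_transpose]
  ext i j
  fin_cases i <;> fin_cases j <;>
    simp [Rot, J2, Matrix.mul_apply, Matrix.transpose_apply, Fin.sum_univ_two] <;>
    linarith [Real.sin_sq_add_cos_sq a]

lemma D_symp (x y : ℝ) :
    (blockDiag2 (Rot x) (Rot y))ᵀ * J4 * blockDiag2 (Rot x) (Rot y) = J4 := by
  rw [show J4 = blockDiag2 J2 J2 from rfl, blockDiag2_transpose, blockDiag2_mul,
    blockDiag2_mul, Rot_symp, Rot_symp]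

-- ## Derivatives

lemma hasDerivAt_Rot (m t : ℝ) :
    HasDerivAt (fun s => Rot (m * s)) (m • (J2 * Rot (m * t))) t := by
  have hid : HasDerivAt (fun s : ℝ => m * s) m t := by
    simpa using (hasDerivAt_id t).const_mul m
  have h : HasDerivAt (fun s => Real.cos (m * s) • (1 : M2) + Real.sin (m * s) • J2) _ t :=
    ((hid.cos.smul_const (1 : M2)).add (hid.sin.smul_const J2))
  have heq : (fun s => Real.cos (m * s) • (1 : M2) + Real.sin (m * s) • J2)
      = fun s => Rot (m * s) := by
    funext s; rw [Rot_eq]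
  rw [heq] at h
  convert h using 1
  ext i j
  fin_cases i <;> fin_cases j <;>
    simp [Rot, J2, Matrix.mul_apply, Fin.sum_univ_two] <;> ring

def bdLM : (M2 × M2) →ₗ[ℝ] M4 where
  toFun p := blockDiag2 p.1 p.2
  map_add' p q := by
    simp [blockDiag2, Matrix.fromBlocks_add]
  map_smul' c p := by
    simp [blockDiag2, Matrix.fromBlocks_smul]

lemma hasDerivAt_blockDiag2 {X Y : ℝ → M2} {X' Y' : M2} {t : ℝ}
    (hX : HasDerivAt X X' t) (hY : HasDerivAt Y Y' t) :
    HasDerivAt (fun s => blockDiag2 (X s) (Y s)) (blockDiag2 X' Y') t := by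
  have hL := (LinearMap.toContinuousLinearMap bdLM).hasFDerivAt
    (x := (X t, Y t))
  exact hL.comp_hasDerivAt t (hX.prodMk hY)

lemma hasDerivAt_mulLR (A B : M4) {f : ℝ → M4} {f' : M4} {t : ℝ}
    (hf : HasDerivAt f f' t) :
    HasDerivAt (fun s => A * f s * B) (A * f' * B) t := by
  have hL := (LinearMap.toContinuousLinearMap
    ((LinearMap.mulRight ℝ B).comp (LinearMap.mulLeft ℝ A))).hasFDerivAt (x := f t)
  exact hL.comp_hasDerivAt t hf

-- ## Positive definiteness

def Sm (a b : ℝ) : M4 := blockDiag2 (a • 1) (b • 1)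

lemma Sm_diag (a b : ℝ) :
    Sm a b = Matrix.diagonal (Sum.elim (fun _ : Fin 2 => a) (fun _ : Fin 2 => b)) := by
  ext i j
  rcases i with i | i <;> rcases j with j | j <;>
    simp [Sm, blockDiag2, Matrix.fromBlocks, Matrix.diagonal_apply, Matrix.one_apply,
      Sum.elim] <;>
    aesop

lemma Sm_posDef {a b : ℝ} (ha : 0 < a) (hb : 0 < b) : (Sm a b).PosDef := by
  rw [Sm_diag]
  exact Matrix.PosDef.diagonal (by rintro (i | i) <;> simpa)

lemma Sm_transpose (a b : ℝ) : (Sm a b)ᵀ = Sm a b := by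
  rw [Sm, blockDiag2_transpose]
  simp

lemma isHermitian_of_symm {A : M4} (h : Aᵀ = A) : A.IsHermitian := by
  have : Aᴴ = Aᵀ := by
    ext i j; simp [Matrix.conjTranspose_apply, Matrix.transpose_apply]
  rw [Matrix.IsHermitian, this, h]

lemma Q_transpose (θ a b : ℝ) :
    (PM θ * Sm a b * (PM θ)ᵀ)ᵀ = PM θ * Sm a b * (PM θ)ᵀ := by
  rw [Matrix.transpose_mul, Matrix.transpose_mul, Matrix.transpose_transpose,
    Sm_transpose, mul_assoc]

lemma Q_posDef (θ : ℝ) {a b : ℝ} (ha : 0 < a) (hb : 0 < b) :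
    (PM θ * Sm a b * (PM θ)ᵀ).PosDef := by
  have hS := Sm_posDef ha hb
  have hQ := hS.mul_mul_conjTranspose_same (B := PM θ) (fun x y h => by
    have h' := congrArg (fun v => v ᵥ* (PM θ)ᵀ) h
    simpa [Matrix.vecMul_vecMul, PM_mul_PMT] using h')
  simpa [Matrix.conjTranspose_eq_transpose_of_trivial] using hQ

-- ## Symplectic conjugation

lemma PMT_mul_J4 (θ : ℝ) : (PM θ)ᵀ * J4 = J4 * (PM θ)ᵀ := by
  rw [PM_transpose]; exact PM_mul_J4 (-θ)

lemma PMT_J4_PM (θ : ℝ) : (PM θ)ᵀ * J4 * PM θ = J4 := by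
  rw [PMT_mul_J4, mul_assoc, PMT_mul_PM, mul_one]

lemma PM_J4_PMT (θ : ℝ) : PM θ * J4 * (PM θ)ᵀ = J4 := by
  rw [PM_mul_J4, mul_assoc, PM_mul_PMT, mul_one]

lemma conj_symp (θ : ℝ) {D : M4} (hD : Dᵀ * J4 * D = J4) :
    (PM θ * D * (PM θ)ᵀ)ᵀ * J4 * (PM θ * D * (PM θ)ᵀ) = J4 := by
  have h1 : (PM θ * D * (PM θ)ᵀ)ᵀ = PM θ * Dᵀ * (PM θ)ᵀ := by
    rw [Matrix.transpose_mul, Matrix.transpose_mul, Matrix.transpose_transpose, mul_assoc]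
  calc (PM θ * D * (PM θ)ᵀ)ᵀ * J4 * (PM θ * D * (PM θ)ᵀ)
      = PM θ * Dᵀ * ((PM θ)ᵀ * J4 * PM θ) * D * (PM θ)ᵀ := by
        rw [h1]; simp only [mul_assoc]
    _ = PM θ * Dᵀ * J4 * D * (PM θ)ᵀ := by rw [PMT_J4_PM]
    _ = PM θ * (Dᵀ * J4 * D) * (PM θ)ᵀ := by simp only [mul_assoc]
    _ = PM θ * J4 * (PM θ)ᵀ := by rw [hD]
    _ = J4 := PM_J4_PMT θ

lemma deriv_key (θ a b x y : ℝ) :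
    PM θ * blockDiag2 (a • (J2 * Rot x)) (b • (J2 * Rot y)) * (PM θ)ᵀ
      = J4 * (PM θ * Sm a b * (PM θ)ᵀ)
        * (PM θ * blockDiag2 (Rot x) (Rot y) * (PM θ)ᵀ) := by
  have h1 : J4 * (Sm a b * blockDiag2 (Rot x) (Rot y))
      = blockDiag2 (a • (J2 * Rot x)) (b • (J2 * Rot y)) := by
    rw [← mul_assoc, show J4 = blockDiag2 J2 J2 from rfl, Sm, blockDiag2_mul, blockDiag2_mul]
    congr 1 <;> simp [Matrix.mul_smul, Matrix.smul_mul]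
  symm
  calc J4 * (PM θ * Sm a b * (PM θ)ᵀ) * (PM θ * blockDiag2 (Rot x) (Rot y) * (PM θ)ᵀ)
      = J4 * PM θ * Sm a b * ((PM θ)ᵀ * PM θ) * (blockDiag2 (Rot x) (Rot y) * (PM θ)ᵀ) := by
        simp only [mul_assoc]
    _ = J4 * PM θ * (Sm a b * blockDiag2 (Rot x) (Rot y)) * (PM θ)ᵀ := by
        rw [PMT_mul_PM, mul_one]; simp only [mul_assoc]
    _ = PM θ * (J4 * (Sm a b * blockDiag2 (Rot x) (Rot y))) * (PM θ)ᵀ := by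
        rw [← PM_mul_J4]; simp only [mul_assoc]
    _ = PM θ * blockDiag2 (a • (J2 * Rot x)) (b • (J2 * Rot y)) * (PM θ)ᵀ := by rw [h1]

-- ## The positive loop

lemma posLoop (θ : ℝ) {a b : ℝ} (ha : 0 < a) (hb : 0 < b)
    (ha2 : Rot (a * (2 * π)) = 1) (hb2 : Rot (b * (2 * π)) = 1) :
    PosLoopJ4 1 (fun t => PM θ * blockDiag2 (Rot (a * t)) (Rot (b * t)) * (PM θ)ᵀ) := by
  refine ⟨?_, ?_, ?_⟩
  · intro t ht
    refine ⟨conj_symp θ (D_symp (a * t) (b * t)),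
      PM θ * Sm a b * (PM θ)ᵀ, Q_transpose θ a b, Q_posDef θ ha hb, ?_⟩
    have hD := hasDerivAt_blockDiag2 (hasDerivAt_Rot a t) (hasDerivAt_Rot b t)
    have h2 := hasDerivAt_mulLR (PM θ) ((PM θ)ᵀ) hD
    rw [deriv_key] at h2
    exact h2.hasDerivWithinAt
  · simp only [mul_zero, Rot_zero, blockDiag2_one, mul_one, PM_mul_PMT]
  · simp only [ha2, hb2, blockDiag2_one, mul_one, PM_mul_PMT]

-- ## Continuity

lemma continuous_Rot {f : ℝ × ℝ → ℝ} (hf : Continuous f) :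
    Continuous fun p => Rot (f p) := by
  rw [show (fun p => Rot (f p))
      = fun p => Real.cos (f p) • (1 : M2) + Real.sin (f p) • J2 from
    funext fun p => Rot_eq _]
  exact ((Real.continuous_cos.comp hf).smul continuous_const).add
    ((Real.continuous_sin.comp hf).smul continuous_const)

lemma continuous_PM {f : ℝ × ℝ → ℝ} (hf : Continuous f) :
    Continuous fun p => PM (f p) := by
  rw [show (fun p => PM (f p))
      = fun p => Real.cos (f p) • (1 : M4) + Real.sin (f p) • Km from
    funext fun p => PM_eq _]
  exact ((Real.continuous_cos.comp hf).smul continuous_const).add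
    ((Real.continuous_sin.comp hf).smul continuous_const)

lemma contH (a b : ℝ) :
    Continuous fun p : ℝ × ℝ =>
      PM (p.1 * (π / 2)) * blockDiag2 (Rot (a * p.2)) (Rot (b * p.2))
        * (PM (p.1 * (π / 2)))ᵀ := by
  have h1 : Continuous fun p : ℝ × ℝ => PM (p.1 * (π / 2)) :=
    continuous_PM (by fun_prop)
  have h2 : Continuous fun p : ℝ × ℝ =>
      blockDiag2 (Rot (a * p.2)) (Rot (b * p.2)) :=
    (continuous_Rot (f := fun p : ℝ × ℝ => a * p.2) (by fun_prop)).matrix_fromBlocks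
      continuous_const continuous_const
      (continuous_Rot (f := fun p : ℝ × ℝ => b * p.2) (by fun_prop))
  exact (h1.matrix_mul h2).matrix_mul h1.matrix_transpose

end

end Stmt15Aux

open Stmt15Aux

/-- The conjugated loops `G(θ,t) = P_θ · blockdiag(exp(ktJ), exp(ℓtJ)) · P_θ⁻¹` form a
homotopy through positive loops based at the identity between
`blockdiag(exp(ktJ), exp(ℓtJ))` and `blockdiag(exp(ℓtJ), exp(ktJ))`. -/
theorem stmt15 (k ℓ : ℤ) (hk : 1 ≤ k) (hl : 1 ≤ ℓ)
    (Pmat : ℝ → Matrix (Fin 2 ⊕ Fin 2) (Fin 2 ⊕ Fin 2) ℝ)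
    (hP : ∀ θ : ℝ, Pmat θ =
      Matrix.fromBlocks (Real.cos θ • (1 : Matrix (Fin 2) (Fin 2) ℝ))
        ((-Real.sin θ) • (1 : Matrix (Fin 2) (Fin 2) ℝ))
        (Real.sin θ • (1 : Matrix (Fin 2) (Fin 2) ℝ))
        (Real.cos θ • (1 : Matrix (Fin 2) (Fin 2) ℝ)))
    (G : ℝ → ℝ → Matrix (Fin 2 ⊕ Fin 2) (Fin 2 ⊕ Fin 2) ℝ)
    (hG : ∀ θ t : ℝ, G θ t =
      Pmat θ *
        blockDiag2 (NormedSpace.exp (((k : ℝ) * t) • J2))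
          (NormedSpace.exp (((ℓ : ℝ) * t) • J2)) *
        (Pmat θ)⁻¹) :
    (∀ t : ℝ, G 0 t = blockDiag2 (NormedSpace.exp (((k : ℝ) * t) • J2))
        (NormedSpace.exp (((ℓ : ℝ) * t) • J2))) ∧
    (∀ t : ℝ, G (π / 2) t = blockDiag2 (NormedSpace.exp (((ℓ : ℝ) * t) • J2))
        (NormedSpace.exp (((k : ℝ) * t) • J2))) ∧
    (∀ θ ∈ Icc (0 : ℝ) (π / 2), PosLoopJ4 1 (G θ)) ∧
    PosHomotopicJ4 1
      (fun t => blockDiag2 (NormedSpace.exp (((k : ℝ) * t) • J2))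
        (NormedSpace.exp (((ℓ : ℝ) * t) • J2)))
      (fun t => blockDiag2 (NormedSpace.exp (((ℓ : ℝ) * t) • J2))
        (NormedSpace.exp (((k : ℝ) * t) • J2))) := by
  have ha : (0 : ℝ) < (k : ℝ) := by exact_mod_cast zero_lt_one.trans_le hk
  have hb : (0 : ℝ) < (ℓ : ℝ) := by exact_mod_cast zero_lt_one.trans_le hl
  have hPmat : ∀ θ, Pmat θ = PM θ := fun θ => hP θ
  have hGeq : ∀ θ t, G θ t
      = PM θ * blockDiag2 (Rot ((k : ℝ) * t)) (Rot ((ℓ : ℝ) * t)) * (PM θ)ᵀ := by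
    intro θ t
    rw [hG θ t, hPmat θ, PM_inv, exp_smul_J2, exp_smul_J2]
  have hGfun : ∀ θ, G θ
      = fun t => PM θ * blockDiag2 (Rot ((k : ℝ) * t)) (Rot ((ℓ : ℝ) * t)) * (PM θ)ᵀ :=
    fun θ => funext fun t => hGeq θ t
  refine ⟨?_, ?_, ?_, ?_⟩
  · intro t
    rw [hGeq, PM_zero, Matrix.transpose_one, one_mul, mul_one, exp_smul_J2, exp_smul_J2]
  · intro t
    rw [hGeq, PM_swap, exp_smul_J2, exp_smul_J2]
  · intro θ _
    rw [hGfun θ]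
    exact posLoop θ ha hb (Rot_int_two_pi k) (Rot_int_two_pi ℓ)
  · refine ⟨fun s t => PM (s * (π / 2))
        * blockDiag2 (Rot ((k : ℝ) * t)) (Rot ((ℓ : ℝ) * t)) * (PM (s * (π / 2)))ᵀ,
      (contH (k : ℝ) (ℓ : ℝ)).continuousOn, ?_, ?_, ?_⟩
    · intro t _
      constructor
      · simp only [zero_mul, PM_zero, Matrix.transpose_one, one_mul, mul_one,
          exp_smul_J2]
      · simp only [one_mul, exp_smul_J2]
        rw [PM_swap]
    · intro s _
      exact ⟨(posLoop (s * (π / 2)) ha hb (Rot_int_two_pi k) (Rot_int_two_pi ℓ)).2.1,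
        (posLoop (s * (π / 2)) ha hb (Rot_int_two_pi k) (Rot_int_two_pi ℓ)).2.2⟩
    · intro s _
      exact (posLoop (s * (π / 2)) ha hb (Rot_int_two_pi k) (Rot_int_two_pi ℓ)).1
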